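/- arXiv:1810.12584 — 5 statements merged into one kernel-verified Lean document; each statement's English description precedes it below -/
import Mathlib

section
/- Let S ⊆ T be a nonempty finite subset with one-sided Hausdorff distance d_H(T, S) = sup_{t∈T} inf_{s∈S} ‖t − s‖₂ ≤ β for some β ≥ 0. Then λ_S ≥ ε* − β·(1 + max_{θ∈Ω} ‖θ‖₂). (Quantitative lower bound from the proof of Theorem 1, claim 2.) -/
open Matrix Set

/-- Worst-case error bound `ε̄_R(θ) = max(0, sup_{(φ,y)∈R} |y − θᵀφ| − d̄)`. -/
noncomputable def ebar {m : ℕ} (dbar : ℝ) (R : Set ((Fin m → ℝ) × ℝ)) (θ : Fin m → ℝ) : ℝ :=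
  max 0 (sSup ((fun q => |q.2 - θ ⬝ᵥ q.1| - dbar) '' R))

/-- Euclidean (2-)norm of a vector in ℝᵐ. -/
noncomputable def enorm {m : ℕ} (θ : Fin m → ℝ) : ℝ :=
  Real.sqrt (∑ i, (θ i) ^ 2)

/-- Euclidean distance between regressor–output pairs, i.e. the 2-norm on ℝ^{m+1}. -/
noncomputable def pairDist {m : ℕ} (t s : (Fin m → ℝ) × ℝ) : ℝ :=
  Real.sqrt (∑ i, (t.1 i - s.1 i) ^ 2 + (t.2 - s.2) ^ 2)

lemma enorm_nonneg {m : ℕ} (θ : Fin m → ℝ) : 0 ≤ _root_.enorm θ := Real.sqrt_nonneg _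

lemma abs_dot_le {m : ℕ} (θ v : Fin m → ℝ) : |θ ⬝ᵥ v| ≤ _root_.enorm θ * _root_.enorm v := by
  have h := Finset.sum_mul_sq_le_sq_mul_sq Finset.univ θ v
  have h2 : |θ ⬝ᵥ v| = Real.sqrt ((∑ i, θ i * v i) ^ 2) := by
    rw [Real.sqrt_sq_eq_abs]; rfl
  rw [h2, _root_.enorm, _root_.enorm, ← Real.sqrt_mul (by positivity)]
  exact Real.sqrt_le_sqrt h

lemma enorm_continuous {m : ℕ} (s : (Fin m → ℝ) × ℝ) :
    Continuous fun t : (Fin m → ℝ) × ℝ => pairDist t s := by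
  unfold pairDist; fun_prop

/-- Quantitative lower bound from the proof of Theorem 1, claim 2:
if `d_H(T,S) = sup_{t∈T} inf_{s∈S} ‖t−s‖₂ ≤ β`, then
`λ_S ≥ ε* − β (1 + max_{θ∈Ω} ‖θ‖₂)`. -/
theorem stmt1 {m : ℕ} (hm : 1 ≤ m) (T : Set ((Fin m → ℝ) × ℝ)) (Ω : Set (Fin m → ℝ))
    (hTne : T.Nonempty) (hTc : IsCompact T) (hΩne : Ω.Nonempty) (hΩc : IsCompact Ω)
    (dbar : ℝ) (hd : 0 ≤ dbar)
    (S : Set ((Fin m → ℝ) × ℝ)) (hSne : S.Nonempty) (hSfin : S.Finite) (hST : S ⊆ T)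
    (β : ℝ) (hβ : 0 ≤ β)
    (hHaus : sSup ((fun t => sInf ((fun s => pairDist t s) '' S)) '' T) ≤ β) :
    sInf ((ebar dbar S) '' Ω) ≥
      sInf ((ebar dbar T) '' Ω) - β * (1 + sSup (enorm '' Ω)) := by
  -- norm sup over Ω
  have hNc : IsCompact (_root_.enorm '' Ω) := hΩc.image (by unfold _root_.enorm; fun_prop)
  have hNbdd : BddAbove (_root_.enorm '' Ω) := hNc.bddAbove
  have hNne : (_root_.enorm '' Ω).Nonempty := hΩne.image _
  set N := sSup (_root_.enorm '' Ω) with hN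
  have hNnn : 0 ≤ N := by
    obtain ⟨θ, hθ⟩ := hΩne
    exact le_trans (enorm_nonneg θ) (le_csSup hNbdd ⟨θ, hθ, rfl⟩)
  -- every t ∈ T has s ∈ S with pairDist t s ≤ β
  have hclose : ∀ t ∈ T, ∃ s ∈ S, pairDist t s ≤ β := by
    intro t ht
    obtain ⟨s₀, hs₀⟩ := id hSne
    -- image of dist over S is finite nonempty
    have hfin : ((fun s => pairDist t s) '' S).Finite := hSfin.image _
    have hne : ((fun s => pairDist t s) '' S).Nonempty := hSne.image _
    have hmem := hne.csInf_mem hfin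
    obtain ⟨s, hsS, hs⟩ := hmem
    refine ⟨s, hsS, ?_⟩
    have hs' : pairDist t s = sInf ((fun s => pairDist t s) '' S) := hs
    rw [hs']
    -- sInf ≤ sSup ≤ β : need bddAbove of outer image
    have hbdd : BddAbove ((fun t => sInf ((fun s => pairDist t s) '' S)) '' T) := by
      obtain ⟨M, hM⟩ := (hTc.image (enorm_continuous s₀)).bddAbove
      refine ⟨M, ?_⟩
      rintro x ⟨t', ht', rfl⟩
      have h1 : sInf ((fun s => pairDist t' s) '' S) ≤ pairDist t' s₀ :=
        csInf_le (hSfin.image _).bddBelow ⟨s₀, hs₀, rfl⟩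
      exact h1.trans (hM ⟨t', ht', rfl⟩)
    exact le_trans (le_csSup hbdd ⟨t, ht, rfl⟩) hHaus
  -- pointwise bound: ebar T θ ≤ ebar S θ + β (1 + N)
  have key : ∀ θ ∈ Ω, ebar dbar T θ ≤ ebar dbar S θ + β * (1 + N) := by
    intro θ hθ
    have hθN : _root_.enorm θ ≤ N := le_csSup hNbdd ⟨θ, hθ, rfl⟩
    have hSrhs : 0 ≤ ebar dbar S θ := le_max_left _ _
    have hrhs : 0 ≤ ebar dbar S θ + β * (1 + N) := by positivity
    rw [ebar, max_le_iff]
    refine ⟨hrhs, csSup_le (hTne.image _) ?_⟩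
    rintro x ⟨t, ht, rfl⟩
    obtain ⟨s, hsS, hdist⟩ := hclose t ht
    have hd0 : 0 ≤ pairDist t s := Real.sqrt_nonneg _
    -- |t.2 - s.2| ≤ pairDist t s
    have hy : |t.2 - s.2| ≤ pairDist t s := by
      rw [← Real.sqrt_sq_eq_abs]
      unfold pairDist
      exact Real.sqrt_le_sqrt (le_add_of_nonneg_left (by positivity))
    have hφ : _root_.enorm (t.1 - s.1) ≤ pairDist t s := by
      unfold _root_.enorm pairDist
      exact Real.sqrt_le_sqrt (le_add_of_nonneg_right (by positivity))
    have hsbound : |s.2 - θ ⬝ᵥ s.1| - dbar ≤ ebar dbar S θ := by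
      refine le_trans (le_csSup (hSfin.image _).bddAbove ⟨s, hsS, rfl⟩) (le_max_right _ _)
    have hdot : |θ ⬝ᵥ t.1 - θ ⬝ᵥ s.1| ≤ _root_.enorm θ * pairDist t s := by
      have := abs_dot_le θ (t.1 - s.1)
      rw [dotProduct_sub] at this
      exact this.trans (mul_le_mul_of_nonneg_left hφ (enorm_nonneg θ))
    have tri : |t.2 - θ ⬝ᵥ t.1| ≤ |s.2 - θ ⬝ᵥ s.1| + |t.2 - s.2| + |θ ⬝ᵥ t.1 - θ ⬝ᵥ s.1| := by
      have : t.2 - θ ⬝ᵥ t.1 = (s.2 - θ ⬝ᵥ s.1) + (t.2 - s.2) - (θ ⬝ᵥ t.1 - θ ⬝ᵥ s.1) := by ring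
      rw [this]
      exact (abs_sub _ _).trans (by gcongr; exact abs_add_le _ _)
    have : |t.2 - θ ⬝ᵥ t.1| - dbar ≤ (|s.2 - θ ⬝ᵥ s.1| - dbar) + (1 + _root_.enorm θ) * pairDist t s := by
      have := tri
      nlinarith [hy, hdot]
    refine this.trans ?_
    have h2 : (1 + _root_.enorm θ) * pairDist t s ≤ (1 + N) * β := by
      apply mul_le_mul (by linarith) hdist hd0 (by linarith)
    linarith [hsbound]
  -- conclude
  have hSimne : ((ebar dbar S) '' Ω).Nonempty := hΩne.image _
  refine le_csInf hSimne ?_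
  rintro x ⟨θ, hθ, rfl⟩
  have h1 : sInf ((ebar dbar T) '' Ω) ≤ ebar dbar T θ := by
    refine csInf_le ⟨0, ?_⟩ ⟨θ, hθ, rfl⟩
    rintro y ⟨θ', _, rfl⟩
    exact le_max_left _ _
  linarith [key θ hθ]
end

section
/- Let (S_N)_{N∈ℕ} be a sequence of nonempty finite subsets of T such that the one-sided Hausdorff distance d_H(T, S_N) = sup_{t∈T} inf_{s∈S_N} ‖t − s‖₂ tends to 0 as N → ∞. Then for every ρ > 0 there exists N ∈ ℕ such that λ_{S_N} ≥ ε* − ρ. (Claim 2 of Theorem 1: the data-based estimate converges to the optimal error bound from below.) -/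
open Matrix Set Filter

lemma pairDist_nonneg {m : ℕ} (t s : (Fin m → ℝ) × ℝ) : 0 ≤ pairDist t s :=
  Real.sqrt_nonneg _

lemma pairDist_continuous {m : ℕ} :
    Continuous (fun p : ((Fin m → ℝ) × ℝ) × ((Fin m → ℝ) × ℝ) => pairDist p.1 p.2) := by
  unfold pairDist
  apply Continuous.sqrt
  fun_prop

/-- Lipschitz-type estimate for the residual. -/
lemma residual_lip {m : ℕ} (θ : Fin m → ℝ) (t s : (Fin m → ℝ) × ℝ) :
    |t.2 - θ ⬝ᵥ t.1| ≤ |s.2 - θ ⬝ᵥ s.1|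
      + (1 + Real.sqrt (∑ i, θ i ^ 2)) * pairDist t s := by
  have hsum : (0:ℝ) ≤ ∑ i, (t.1 i - s.1 i) ^ 2 :=
    Finset.sum_nonneg fun i _ => sq_nonneg _
  have h1 : |t.2 - s.2| ≤ pairDist t s := by
    rw [← Real.sqrt_sq_eq_abs]
    apply Real.sqrt_le_sqrt
    nlinarith [sq_nonneg (t.2 - s.2)]
  have h2 : Real.sqrt (∑ i, (t.1 i - s.1 i) ^ 2) ≤ pairDist t s := by
    apply Real.sqrt_le_sqrt
    nlinarith [sq_nonneg (t.2 - s.2)]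
  have hcs : |θ ⬝ᵥ (t.1 - s.1)| ≤
      Real.sqrt (∑ i, θ i ^ 2) * Real.sqrt (∑ i, (t.1 i - s.1 i) ^ 2) := by
    have := Real.sum_mul_le_sqrt_mul_sqrt Finset.univ (fun i => |θ i|)
      (fun i => |t.1 i - s.1 i|)
    simp only [sq_abs] at this
    calc |θ ⬝ᵥ (t.1 - s.1)| ≤ ∑ i, |θ i * (t.1 - s.1) i| := by
          exact Finset.abs_sum_le_sum_abs _ _
      _ = ∑ i, |θ i| * |t.1 i - s.1 i| := by
          simp [abs_mul, Pi.sub_apply]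
      _ ≤ _ := this
  have hθ : (0:ℝ) ≤ Real.sqrt (∑ i, θ i ^ 2) := Real.sqrt_nonneg _
  have hdot : θ ⬝ᵥ t.1 - θ ⬝ᵥ s.1 = θ ⬝ᵥ (t.1 - s.1) := by
    rw [dotProduct_sub]
  have key : |(t.2 - θ ⬝ᵥ t.1) - (s.2 - θ ⬝ᵥ s.1)| ≤
      (1 + Real.sqrt (∑ i, θ i ^ 2)) * pairDist t s := by
    have : (t.2 - θ ⬝ᵥ t.1) - (s.2 - θ ⬝ᵥ s.1) = (t.2 - s.2) - θ ⬝ᵥ (t.1 - s.1) := by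
      rw [← hdot]; ring
    rw [this]
    calc |(t.2 - s.2) - θ ⬝ᵥ (t.1 - s.1)| ≤ |t.2 - s.2| + |θ ⬝ᵥ (t.1 - s.1)| :=
          abs_sub _ _
      _ ≤ pairDist t s + Real.sqrt (∑ i, θ i ^ 2) * pairDist t s := by
          refine add_le_add h1 (hcs.trans ?_)
          exact mul_le_mul_of_nonneg_left h2 hθ
      _ = (1 + Real.sqrt (∑ i, θ i ^ 2)) * pairDist t s := by ring
  calc |t.2 - θ ⬝ᵥ t.1| ≤ |s.2 - θ ⬝ᵥ s.1| + |(t.2 - θ ⬝ᵥ t.1) - (s.2 - θ ⬝ᵥ s.1)| := by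
        have := abs_sub_abs_le_abs_sub (t.2 - θ ⬝ᵥ t.1) (s.2 - θ ⬝ᵥ s.1)
        linarith
    _ ≤ _ := add_le_add le_rfl key

set_option maxHeartbeats 1000000 in
/-- Claim 2 of Theorem 1: if the one-sided Hausdorff distance `d_H(T, S_N)` tends to `0`,
then for every `ρ > 0` there exists `N` with `λ_{S_N} ≥ ε* − ρ`. -/
theorem stmt2 {m : ℕ} (hm : 1 ≤ m) (T : Set ((Fin m → ℝ) × ℝ)) (Ω : Set (Fin m → ℝ))
    (hTne : T.Nonempty) (hTc : IsCompact T) (hΩne : Ω.Nonempty) (hΩc : IsCompact Ω)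
    (dbar : ℝ) (hd : 0 ≤ dbar)
    (S : ℕ → Set ((Fin m → ℝ) × ℝ))
    (hSne : ∀ N, (S N).Nonempty) (hSfin : ∀ N, (S N).Finite) (hST : ∀ N, S N ⊆ T)
    (hHaus : Tendsto (fun N => sSup ((fun t => sInf ((fun s => pairDist t s) '' S N)) '' T))
      atTop (nhds 0)) :
    ∀ ρ > 0, ∃ N : ℕ,
      sInf ((ebar dbar (S N)) '' Ω) ≥ sInf ((ebar dbar T) '' Ω) - ρ := by
  intro ρ hρ
  -- bound K on sqrt (∑ θ i ^2) over Ω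
  have hgcont : Continuous fun θ : Fin m → ℝ => Real.sqrt (∑ i, θ i ^ 2) := by
    apply Continuous.sqrt; fun_prop
  obtain ⟨θK, hθKΩ, hθKmax⟩ := hΩc.exists_isMaxOn hΩne hgcont.continuousOn
  set K : ℝ := Real.sqrt (∑ i, θK i ^ 2) with hK
  have hK0 : 0 ≤ K := Real.sqrt_nonneg _
  have hKb : ∀ θ ∈ Ω, Real.sqrt (∑ i, θ i ^ 2) ≤ K := fun θ hθ => hθKmax hθ
  have hKpos : (0:ℝ) < 1 + K := by linarith
  -- diameter bound D for pairDist on T × T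
  obtain ⟨⟨tD, sD⟩, hmemD, hDmax⟩ := (hTc.prod hTc).exists_isMaxOn (hTne.prod hTne)
    pairDist_continuous.continuousOn
  set D : ℝ := pairDist tD sD with hDdef
  have hD : ∀ t ∈ T, ∀ s ∈ T, pairDist t s ≤ D := by
    intro t ht s hs
    rw [isMaxOn_iff] at hDmax
    exact hDmax (t, s) (Set.mk_mem_prod ht hs)
  -- choose N with h_N < ρ / (1 + K)
  have hball := hHaus.eventually (eventually_lt_nhds (div_pos hρ hKpos))
  obtain ⟨N, hN⟩ := hball.exists
  refine ⟨N, ?_⟩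
  set hS := fun t => sInf ((fun s => pairDist t s) '' S N) with hSdef
  set hT : ℝ := sSup (hS '' T) with hTdef
  have hTlt : hT < ρ / (1 + K) := hN
  -- basic facts about infimum of distances
  have hbddT : BddAbove (hS '' T) := by
    refine ⟨D, ?_⟩
    rintro _ ⟨t, ht, rfl⟩
    obtain ⟨s0, hs0⟩ := hSne N
    exact le_trans (csInf_le ⟨0, by rintro _ ⟨s, hs, rfl⟩; exact pairDist_nonneg _ _⟩
      ⟨s0, hs0, rfl⟩) (hD t ht s0 (hST N hs0))
  have hclose : ∀ t ∈ T, ∃ s ∈ S N, pairDist t s ≤ hT := by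
    intro t ht
    have hfin : ((fun s => pairDist t s) '' S N).Finite := (hSfin N).image _
    have hne : ((fun s => pairDist t s) '' S N).Nonempty := (hSne N).image _
    obtain ⟨s, hs, hseq⟩ := hne.csInf_mem hfin
    refine ⟨s, hs, ?_⟩
    have h1 : pairDist t s = hS t := hseq
    rw [h1]
    exact le_csSup hbddT ⟨t, ht, rfl⟩
  have hTnn : 0 ≤ hT := by
    obtain ⟨t, ht⟩ := hTne
    refine le_trans ?_ (le_csSup hbddT ⟨t, ht, rfl⟩)
    exact le_csInf ((hSne N).image _) (by rintro _ ⟨s, hs, rfl⟩; exact pairDist_nonneg _ _)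
  -- key pointwise estimate : ebar T θ ≤ ebar S θ + ρ for θ ∈ Ω
  have hmain : ∀ θ ∈ Ω, ebar dbar T θ ≤ ebar dbar (S N) θ + ρ := by
    intro θ hθ
    have hδ : (1 + K) * hT ≤ ρ := (le_div_iff₀' hKpos).1 hTlt.le
    have hSbdd : BddAbove ((fun q => |q.2 - θ ⬝ᵥ q.1| - dbar) '' S N) :=
      ((hSfin N).image _).bddAbove
    have hptwise : ∀ t ∈ T, |t.2 - θ ⬝ᵥ t.1| - dbar ≤ ebar dbar (S N) θ + ρ := by
      intro t ht
      obtain ⟨s, hs, hts⟩ := hclose t ht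
      have hlip := residual_lip θ t s
      have hsK : Real.sqrt (∑ i, θ i ^ 2) ≤ K := hKb θ hθ
      have hmul : (1 + Real.sqrt (∑ i, θ i ^ 2)) * pairDist t s ≤ (1 + K) * hT := by
        apply mul_le_mul (by linarith) hts (pairDist_nonneg _ _) (by linarith)
      have hsS : |s.2 - θ ⬝ᵥ s.1| - dbar ≤ ebar dbar (S N) θ := by
        refine le_trans (le_csSup hSbdd ⟨s, hs, rfl⟩) (le_max_right _ _)
      linarith
    have hTim : ((fun q => |q.2 - θ ⬝ᵥ q.1| - dbar) '' T).Nonempty := hTne.image _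
    have h0 : (0:ℝ) ≤ ebar dbar (S N) θ + ρ := by
      have := le_max_left 0 (sSup ((fun q => |q.2 - θ ⬝ᵥ q.1| - dbar) '' (S N)))
      unfold ebar; linarith
    refine max_le h0 ?_
    refine csSup_le hTim ?_
    rintro _ ⟨t, ht, rfl⟩
    exact hptwise t ht
  -- conclude
  have hbddbelow : BddBelow ((ebar dbar T) '' Ω) := by
    refine ⟨0, ?_⟩
    rintro _ ⟨θ, hθ, rfl⟩
    exact le_max_left _ _
  refine ge_iff_le.2 ?_
  refine le_csInf (hΩne.image _) ?_
  rintro _ ⟨θ, hθ, rfl⟩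
  have := csInf_le hbddbelow (⟨θ, hθ, rfl⟩ : ebar dbar T θ ∈ (ebar dbar T) '' Ω)
  have h2 := hmain θ hθ
  linarith
end

section
/- Let F ⊆ Φ be a nonempty finite subset with one-sided Hausdorff distance d_H(Φ, F) = sup_{φ∈Φ} inf_{ψ∈F} ‖φ − ψ‖₂ ≤ β for some β ≥ 0. Then τ_F(θ̂) ≥ τ(θ̂) − β · max_{θ∈Θ} ‖θ − θ̂‖₂. (Quantitative lower bound from the proof of Lemma 1, claim 2.) -/
open Matrix Set

/-- Worst-case error bound over a set `R` of regressors: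
`τ_R(θ̂) = sup_{φ∈R} sup_{θ∈Θ} |(θ − θ̂)ᵀφ| + ε̂`. -/
noncomputable def tauOn {m : ℕ} (Θ : Set (Fin m → ℝ)) (εhat : ℝ) (θhat : Fin m → ℝ)
    (R : Set (Fin m → ℝ)) : ℝ :=
  sSup ((fun φ => sSup ((fun θ => |(θ - θhat) ⬝ᵥ φ|) '' Θ)) '' R) + εhat

/-- Euclidean (2-)norm of a vector in ℝᵐ. -/
noncomputable def enorm₂ {m : ℕ} (θ : Fin m → ℝ) : ℝ :=
  Real.sqrt (∑ i, (θ i) ^ 2)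

lemma abs_dot_le_s4 {m : ℕ} (x y : Fin m → ℝ) : |x ⬝ᵥ y| ≤ enorm₂ x * enorm₂ y := by
  have h := abs_real_inner_le_norm ((WithLp.equiv 2 (Fin m → ℝ)).symm x)
    ((WithLp.equiv 2 (Fin m → ℝ)).symm y)
  simpa [enorm₂, EuclideanSpace.norm_eq, PiLp.inner_apply, dotProduct,
    RCLike.inner_apply, sq_abs, Real.norm_eq_abs, mul_comm] using h

lemma enorm_nonneg' {m : ℕ} (x : Fin m → ℝ) : 0 ≤ enorm₂ x := Real.sqrt_nonneg _

lemma cont_enorm {m : ℕ} (ψ : Fin m → ℝ) : Continuous fun φ : Fin m → ℝ => enorm₂ (φ - ψ) := by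
  unfold enorm₂; fun_prop

lemma cont_enorm' {m : ℕ} (ψ : Fin m → ℝ) : Continuous fun φ : Fin m → ℝ => enorm₂ (φ - ψ) := by
  unfold enorm₂; fun_prop

lemma cont_dot {m : ℕ} (θhat ψ : Fin m → ℝ) :
    Continuous fun θ : Fin m → ℝ => |(θ - θhat) ⬝ᵥ ψ| := by
  simp only [dotProduct]; fun_prop


/-- Quantitative lower bound from the proof of Lemma 1, claim 2: if
`d_H(Φ,F) = sup_{φ∈Φ} inf_{ψ∈F} ‖φ−ψ‖₂ ≤ β`, then
`τ_F(θ̂) ≥ τ(θ̂) − β · max_{θ∈Θ} ‖θ − θ̂‖₂`. -/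
theorem stmt4 {m : ℕ} (hm : 1 ≤ m) (Φ : Set (Fin m → ℝ)) (Θ : Set (Fin m → ℝ))
    (hΦne : Φ.Nonempty) (hΦc : IsCompact Φ) (hΘne : Θ.Nonempty) (hΘc : IsCompact Θ)
    (θhat : Fin m → ℝ) (εhat : ℝ) (hε : 0 ≤ εhat)
    (F : Set (Fin m → ℝ)) (hFne : F.Nonempty) (hFfin : F.Finite) (hFΦ : F ⊆ Φ)
    (β : ℝ) (hβ : 0 ≤ β)
    (hHaus : sSup ((fun φ => sInf ((fun ψ => enorm₂ (φ - ψ)) '' F)) '' Φ) ≤ β) :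
    tauOn Θ εhat θhat F ≥
      tauOn Θ εhat θhat Φ - β * sSup ((fun θ => enorm₂ (θ - θhat)) '' Θ) := by
  classical
  set g : (Fin m → ℝ) → ℝ := fun φ => sSup ((fun θ => |(θ - θhat) ⬝ᵥ φ|) '' Θ) with hg
  set M : ℝ := sSup ((fun θ => enorm₂ (θ - θhat)) '' Θ) with hM
  obtain ⟨θ0, hθ0⟩ := hΘne
  -- M facts
  have hMbdd : BddAbove ((fun θ => enorm₂ (θ - θhat)) '' Θ) :=
    (hΘc.image (cont_enorm θhat)).bddAbove
  have hMle : ∀ θ ∈ Θ, enorm₂ (θ - θhat) ≤ M := fun θ hθ =>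
    le_csSup hMbdd ⟨θ, hθ, rfl⟩
  have hM0 : 0 ≤ M := le_trans (enorm_nonneg' _) (hMle θ0 hθ0)
  -- g facts
  have hgbdd : ∀ ψ : Fin m → ℝ, BddAbove ((fun θ => |(θ - θhat) ⬝ᵥ ψ|) '' Θ) := fun ψ =>
    (hΘc.image (cont_dot θhat ψ)).bddAbove
  have hgle : ∀ (ψ : Fin m → ℝ), ∀ θ ∈ Θ, |(θ - θhat) ⬝ᵥ ψ| ≤ g ψ := fun ψ θ hθ =>
    le_csSup (hgbdd ψ) ⟨θ, hθ, rfl⟩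
  have hg0 : ∀ ψ : Fin m → ℝ, 0 ≤ g ψ := fun ψ =>
    le_trans (abs_nonneg _) (hgle ψ θ0 hθ0)
  -- sSup over F of g
  have hgFbdd : BddAbove (g '' F) := (hFfin.image g).bddAbove
  obtain ⟨ψ0, hψ0⟩ := hFne
  have hgF0 : 0 ≤ sSup (g '' F) := le_trans (hg0 ψ0) (le_csSup hgFbdd ⟨ψ0, hψ0, rfl⟩)
  -- boundedness of the Hausdorff image
  obtain ⟨K, hK⟩ : BddAbove ((fun φ => enorm₂ (φ - ψ0)) '' Φ) :=
    (hΦc.image (cont_enorm ψ0)).bddAbove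
  have hHbdd : BddAbove ((fun φ => sInf ((fun ψ => enorm₂ (φ - ψ)) '' F)) '' Φ) := by
    refine ⟨K, ?_⟩
    rintro y ⟨φ, hφ, rfl⟩
    have h1 : sInf ((fun ψ => enorm₂ (φ - ψ)) '' F) ≤ enorm₂ (φ - ψ0) :=
      csInf_le ((hFfin.image _).bddBelow) ⟨ψ0, hψ0, rfl⟩
    exact h1.trans (hK ⟨φ, hφ, rfl⟩)
  -- key pointwise bound
  have key : ∀ φ ∈ Φ, g φ ≤ sSup (g '' F) + β * M := by
    intro φ hφ
    -- choose nearest ψ ∈ F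
    have hSne : ((fun ψ => enorm₂ (φ - ψ)) '' F).Nonempty := ⟨_, ⟨ψ0, hψ0, rfl⟩⟩
    have hSfin : ((fun ψ => enorm₂ (φ - ψ)) '' F).Finite := hFfin.image _
    obtain ⟨ψ, hψF, hψeq⟩ := hSne.csInf_mem hSfin
    have hψβ : enorm₂ (φ - ψ) ≤ β := by
      have h1 : sInf ((fun ψ => enorm₂ (φ - ψ)) '' F) ≤
          sSup ((fun φ => sInf ((fun ψ => enorm₂ (φ - ψ)) '' F)) '' Φ) :=
        le_csSup hHbdd ⟨φ, hφ, rfl⟩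
      exact le_trans (le_of_eq hψeq) (h1.trans hHaus)
    refine Real.sSup_le ?_ (by positivity)
    rintro x ⟨θ, hθ, rfl⟩
    have hsplit : (θ - θhat) ⬝ᵥ φ = (θ - θhat) ⬝ᵥ ψ + (θ - θhat) ⬝ᵥ (φ - ψ) := by
      rw [← dotProduct_add, add_sub_cancel]
    have h2 : |(θ - θhat) ⬝ᵥ φ| ≤ |(θ - θhat) ⬝ᵥ ψ| + |(θ - θhat) ⬝ᵥ (φ - ψ)| := by
      rw [hsplit]; exact abs_add_le _ _
    have h3 : |(θ - θhat) ⬝ᵥ (φ - ψ)| ≤ M * β := by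
      refine le_trans (abs_dot_le_s4 _ _) ?_
      exact mul_le_mul (hMle θ hθ) hψβ (enorm_nonneg' _) hM0
    have h4 : g ψ ≤ sSup (g '' F) := le_csSup hgFbdd ⟨ψ, hψF, rfl⟩
    have h5 := hgle ψ θ hθ
    nlinarith [h2, h3, h4, h5]
  have main : sSup (g '' Φ) ≤ sSup (g '' F) + β * M := by
    refine Real.sSup_le ?_ (by positivity)
    rintro x ⟨φ, hφ, rfl⟩
    exact key φ hφ
  simp only [tauOn, ge_iff_le]
  linarith [main]
end

section
/- For every integer p ≥ 1 there exist coefficient vectors α ∈ ℝⁿ, β ∈ ℝ^{n−1}, γ ∈ ℝᵖ and η ∈ ℝᵖ, depending only on (a, b, c, p) and not on the trajectory, such that for every triple of sequences (z, u, v) satisfying the ARX recursion and every k ∈ ℤ: z(k+p) = Σ_{i=0}^{n−1} α_{i+1} z(k−i) + Σ_{j=1}^{n−1} β_j u(k−j) + Σ_{l=0}^{p−1} γ_{l+1} u(k+l) + Σ_{l=0}^{p−1} η_{l+1} v(k+l). (Exact multi-step representation of an ARX system, equation (8) of the paper.) -/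
open Finset

private lemma arx_helper (m : ℕ) (A B : ℕ → ℝ) (c : ℝ) (p : ℕ) (hp : 1 ≤ p) :
    ∃ α β γ η : ℕ → ℝ,
      ∀ z u v : ℤ → ℝ,
        (∀ k : ℤ, z (k + 1) =
            ∑ i ∈ range (m + 1), A i * z (k - i) +
            ∑ j ∈ range m, B j * u (k - (j + 1)) +
            c * u k + v k) →
        ∀ k : ℤ, z (k + p) =
            ∑ i ∈ range (m + 1), α i * z (k - i) +
            ∑ j ∈ range m, β j * u (k - (j + 1)) +
            ∑ l ∈ range p, γ l * u (k + l) +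
            ∑ l ∈ range p, η l * v (k + l) := by
  induction p, hp using Nat.le_induction with
  | base =>
      refine ⟨A, B, fun _ => c, fun _ => 1, ?_⟩
      intro z u v hz k
      simpa using hz k
  | succ p hp ih =>
      obtain ⟨α, β, γ, η, h⟩ := ih
      refine ⟨fun i => α 0 * A i + (if i < m then α (i + 1) else 0),
        fun j => α 0 * B j + (if j + 1 < m then β (j + 1) else 0),
        fun l => if l = 0 then α 0 * c + (if 0 < m then β 0 else 0) else γ (l - 1),
        fun l => if l = 0 then α 0 else η (l - 1), ?_⟩
      intro z u v hz k
      have hk : (k + (p + 1 : ℕ) : ℤ) = (k + 1) + p := by push_cast; ring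
      rw [hk, h z u v hz (k + 1)]
      have h1 : ∑ i ∈ range (m + 1), α i * z (k + 1 - i)
          = α 0 * z (k + 1) + ∑ i ∈ range m, α (i + 1) * z (k - i) := by
        rw [Finset.sum_range_succ', add_comm]
        congr 1
        · norm_num
        · refine Finset.sum_congr rfl fun i _ => ?_
          congr 1
          push_cast
          ring
      have h2 : ∑ j ∈ range m, β j * u (k + 1 - (j + 1))
          = ∑ j ∈ range m, β j * u (k - j) := by
        refine Finset.sum_congr rfl fun j _ => ?_
        congr 1
        ring
      have h2' : ∑ j ∈ range m, β j * u (k - j)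
          = (if 0 < m then β 0 else 0) * u k
            + ∑ j ∈ range m, (if j + 1 < m then β (j + 1) else 0) * u (k - (j + 1)) := by
        rcases m with _ | m'
        · simp
        · rw [Finset.sum_range_succ', add_comm]
          congr 1
          · norm_num
          · rw [Finset.sum_range_succ, if_neg (lt_irrefl (m' + 1)), zero_mul, add_zero]
            refine Finset.sum_congr rfl fun j hj => ?_
            rw [if_pos (by simpa using Finset.mem_range.mp hj)]
            congr 2
      have h3 : ∑ l ∈ range (p + 1),
            (if l = 0 then α 0 * c + (if 0 < m then β 0 else 0) else γ (l - 1)) * u (k + l)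
          = (α 0 * c + (if 0 < m then β 0 else 0)) * u k
            + ∑ l ∈ range p, γ l * u ((k + 1) + l) := by
        rw [Finset.sum_range_succ', add_comm]
        congr 1
        · norm_num
        · refine Finset.sum_congr rfl fun l _ => ?_
          rw [if_neg (Nat.succ_ne_zero l)]
          simp only [Nat.add_sub_cancel]
          congr 1
          push_cast
          ring
      have h4 : ∑ l ∈ range (p + 1),
            (if l = 0 then α 0 else η (l - 1)) * v (k + l)
          = α 0 * v k + ∑ l ∈ range p, η l * v ((k + 1) + l) := by
        rw [Finset.sum_range_succ', add_comm]
        congr 1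
        · norm_num
        · refine Finset.sum_congr rfl fun l _ => ?_
          rw [if_neg (Nat.succ_ne_zero l)]
          simp only [Nat.add_sub_cancel]
          congr 1
          push_cast
          ring
      have h5 : ∑ i ∈ range (m + 1),
            (α 0 * A i + (if i < m then α (i + 1) else 0)) * z (k - i)
          = α 0 * ∑ i ∈ range (m + 1), A i * z (k - i)
            + ∑ i ∈ range m, α (i + 1) * z (k - i) := by
        simp only [add_mul, Finset.sum_add_distrib, mul_assoc]
        rw [← Finset.mul_sum]
        congr 1
        rw [Finset.sum_range_succ, if_neg (lt_irrefl m), zero_mul, add_zero]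
        exact Finset.sum_congr rfl fun i hi => by rw [if_pos (Finset.mem_range.mp hi)]
      have h6 : ∑ j ∈ range m,
            (α 0 * B j + (if j + 1 < m then β (j + 1) else 0)) * u (k - (j + 1))
          = α 0 * ∑ j ∈ range m, B j * u (k - (j + 1))
            + ∑ j ∈ range m, (if j + 1 < m then β (j + 1) else 0) * u (k - (j + 1)) := by
        simp only [add_mul, Finset.sum_add_distrib, mul_assoc]
        rw [← Finset.mul_sum]
      simp only []
      rw [h1, h2, h2', h3, h4, h5, h6, hz k]
      ring

/-- Exact multi-step representation of an ARX system (equation (8) of the paper):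
for every `p ≥ 1` there are coefficient vectors `α, β, γ, η`, depending only on
`(a, b, c, p)`, such that every trajectory of the ARX recursion satisfies the
`p`-steps-ahead formula. -/
theorem stmt10 (n : ℕ) (hn : 1 ≤ n) (a : Fin n → ℝ) (b : Fin (n - 1) → ℝ) (c : ℝ)
    (p : ℕ) (hp : 1 ≤ p) :
    ∃ (α : Fin n → ℝ) (β : Fin (n - 1) → ℝ) (γ : Fin p → ℝ) (η : Fin p → ℝ),
      ∀ z u v : ℤ → ℝ,
        (∀ k : ℤ, z (k + 1) =
            ∑ i : Fin n, a i * z (k - (i : ℕ)) +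
            ∑ j : Fin (n - 1), b j * u (k - ((j : ℕ) + 1)) +
            c * u k + v k) →
        ∀ k : ℤ, z (k + p) =
            ∑ i : Fin n, α i * z (k - (i : ℕ)) +
            ∑ j : Fin (n - 1), β j * u (k - ((j : ℕ) + 1)) +
            ∑ l : Fin p, γ l * u (k + (l : ℕ)) +
            ∑ l : Fin p, η l * v (k + (l : ℕ)) := by
  obtain ⟨m, rfl⟩ : ∃ m, n = m + 1 := ⟨n - 1, (Nat.succ_pred_eq_of_pos hn).symm⟩
  set A : ℕ → ℝ := fun i => if h : i < m + 1 then a ⟨i, h⟩ else 0 with hA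
  set B : ℕ → ℝ := fun j => if h : j < m then b ⟨j, h⟩ else 0 with hB
  obtain ⟨α, β, γ, η, H⟩ := arx_helper m A B c p hp
  refine ⟨fun i => α i, fun j => β j, fun l => γ l, fun l => η l, ?_⟩
  intro z u v hz k
  have hz' : ∀ k : ℤ, z (k + 1) =
      ∑ i ∈ range (m + 1), A i * z (k - i) +
      ∑ j ∈ range m, B j * u (k - (j + 1)) +
      c * u k + v k := by
    intro k
    rw [hz k]
    have e1 : ∑ i : Fin (m + 1), a i * z (k - (i : ℕ))
        = ∑ i ∈ range (m + 1), A i * z (k - i) := by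
      rw [← Fin.sum_univ_eq_sum_range (fun i => A i * z (k - i)) (m + 1)]
      refine Finset.sum_congr rfl fun i _ => ?_
      have hi : (i : ℕ) < m + 1 := i.isLt
      simp [hA, hi]
      exact fun h => absurd h (by omega)
    have e2 : ∑ j : Fin (m + 1 - 1), b j * u (k - ((j : ℕ) + 1))
        = ∑ j ∈ range m, B j * u (k - (j + 1)) := by
      rw [← Fin.sum_univ_eq_sum_range (fun j => B j * u (k - (j + 1))) m]
      refine Finset.sum_congr rfl fun j _ => ?_
      have hj : (j : ℕ) < m := j.isLt
      simp [hB, hj]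
    rw [e1, e2]
  have g1 : ∑ i : Fin (m + 1), α (i : ℕ) * z (k - (i : ℕ))
      = ∑ i ∈ range (m + 1), α i * z (k - i) :=
    Fin.sum_univ_eq_sum_range (fun i => α i * z (k - i)) (m + 1)
  have g2 : ∑ j : Fin (m + 1 - 1), β (j : ℕ) * u (k - ((j : ℕ) + 1))
      = ∑ j ∈ range m, β j * u (k - (j + 1)) :=
    Fin.sum_univ_eq_sum_range (fun j => β j * u (k - (j + 1))) m
  have g3 : ∑ l : Fin p, γ (l : ℕ) * u (k + (l : ℕ))
      = ∑ l ∈ range p, γ l * u (k + l) :=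
    Fin.sum_univ_eq_sum_range (fun l => γ l * u (k + l)) p
  have g4 : ∑ l : Fin p, η (l : ℕ) * v (k + (l : ℕ))
      = ∑ l ∈ range p, η l * v (k + l) :=
    Fin.sum_univ_eq_sum_range (fun l => η l * v (k + l)) p
  rw [H z u v hz' k, ← g1, ← g2, ← g3, ← g4]
end

section
/- Let X : ℕ → ℝⁿ satisfy X(k+1) = A X(k) + B u(k) + M w(k) for all k, with |w(j)| ≤ w̄ for all j, and let z(k) = C X(k). Fix k ∈ ℕ, p ≥ 1, and suppose X_y ∈ ℝⁿ satisfies X_y − X(k) = E δ for some δ ∈ ℝᵒ with ‖δ‖_∞ ≤ d̄, where n = 2o − 1 and E = [I_o ; 0_{(o−1)×o}] ∈ ℝ^{n×o}. Define ẑ(k+p) = C Aᵖ X_y + Σ_{i=0}^{p−1} C Aⁱ B u(k+p−1−i). Then |z(k+p) − ẑ(k+p)| ≤ Σ_{i=0}^{p−1} |C Aⁱ M| · w̄ + ‖C Aᵖ E‖_∞ · d̄, where ‖C Aᵖ E‖_∞ denotes the sum of the absolute values of the entries of the row vector C Aᵖ E. (Equation (38) of the paper.) -/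
open Matrix

lemma myDotSum {n : Type*} [Fintype n] (C : n → ℝ) (s : Finset ℕ) (f : ℕ → n → ℝ) :
    C ⬝ᵥ (∑ i ∈ s, f i) = ∑ i ∈ s, C ⬝ᵥ f i := by
  simp only [dotProduct, Finset.sum_apply, Finset.mul_sum]
  exact Finset.sum_comm

lemma myMulVecSum {m n : Type*} [Fintype m] [Fintype n] (A : Matrix m n ℝ) (s : Finset ℕ)
    (f : ℕ → n → ℝ) : A.mulVec (∑ i ∈ s, f i) = ∑ i ∈ s, A.mulVec (f i) := by
  funext j
  simp only [mulVec, Finset.sum_apply]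
  exact myDotSum _ _ _

/-- Equation (38) of the paper: bound on the `p`-steps-ahead prediction error of the
state-space model, when the state is initialized with a noise-corrupted value
`X_y = X(k) + E δ`, `‖δ‖_∞ ≤ d̄`, and the process disturbance satisfies `|w| ≤ w̄`:
`|z(k+p) − ẑ(k+p)| ≤ Σ_{i=0}^{p−1} |C Aⁱ M| w̄ + ‖C Aᵖ E‖_∞ d̄`,
where `‖C Aᵖ E‖_∞` is the sum of the absolute values of the entries of the row
vector `C Aᵖ E`. -/
theorem stmt12 (o : ℕ) (ho : 1 ≤ o)
    (A : Matrix (Fin (2 * o - 1)) (Fin (2 * o - 1)) ℝ)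
    (B M : Fin (2 * o - 1) → ℝ) (C : Fin (2 * o - 1) → ℝ)
    (u w : ℕ → ℝ) (wbar : ℝ) (hwbar : 0 ≤ wbar) (hw : ∀ j, |w j| ≤ wbar)
    (dbar : ℝ) (hdbar : 0 ≤ dbar)
    (X : ℕ → Fin (2 * o - 1) → ℝ)
    (hX : ∀ k, X (k + 1) = A.mulVec (X k) + u k • B + w k • M)
    (E : Matrix (Fin (2 * o - 1)) (Fin o) ℝ)
    (hE : ∀ (i : Fin (2 * o - 1)) (j : Fin o), E i j = if (i : ℕ) = (j : ℕ) then 1 else 0)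
    (k p : ℕ) (hp : 1 ≤ p)
    (Xy : Fin (2 * o - 1) → ℝ) (δ : Fin o → ℝ)
    (hδ : ∀ i, |δ i| ≤ dbar) (hXy : Xy - X k = E.mulVec δ) :
    |C ⬝ᵥ X (k + p) -
        (C ⬝ᵥ (A ^ p).mulVec Xy +
          ∑ i ∈ Finset.range p, (C ⬝ᵥ (A ^ i).mulVec B) * u (k + p - 1 - i))| ≤
      (∑ i ∈ Finset.range p, |C ⬝ᵥ (A ^ i).mulVec M|) * wbar +
        (∑ j : Fin o, |Matrix.vecMul (Matrix.vecMul C (A ^ p)) E j|) * dbar := by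
  -- state evolution
  have key : ∀ q, X (k + q) = (A ^ q).mulVec (X k) +
      ∑ i ∈ Finset.range q,
        (u (k + q - 1 - i) • (A ^ i).mulVec B + w (k + q - 1 - i) • (A ^ i).mulVec M) := by
    intro q
    induction q with
    | zero => simp
    | succ q ih =>
      have hq : k + (q + 1) = (k + q) + 1 := rfl
      rw [hq, hX, ih, Finset.sum_range_succ', mulVec_add, myMulVecSum, mulVec_mulVec,
        ← pow_succ']
      have harith : ∀ i ∈ Finset.range q,
          A.mulVec (u (k + q - 1 - i) • (A ^ i).mulVec B + w (k + q - 1 - i) • (A ^ i).mulVec M)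
          = u (k + (q+1) - 1 - (i+1)) • (A ^ (i+1)).mulVec B
            + w (k + (q+1) - 1 - (i+1)) • (A ^ (i+1)).mulVec M := by
        intro i hi
        rw [Finset.mem_range] at hi
        have : k + (q+1) - 1 - (i+1) = k + q - 1 - i := by omega
        rw [this, mulVec_add, mulVec_smul, mulVec_smul, mulVec_mulVec, mulVec_mulVec,
          ← pow_succ']
      rw [Finset.sum_congr rfl harith]
      have h0 : k + (q + 1) - 1 - 0 = k + q := by omega
      simp only [h0, pow_zero, one_mulVec]
      abel
  -- express Xy
  have hXy' : Xy = X k + E.mulVec δ := by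
    have := hXy; funext j
    have h2 : (Xy - X k) j = E.mulVec δ j := by rw [hXy]
    simp only [Pi.sub_apply] at h2
    simp [Pi.add_apply]; linarith
  -- error expression
  have herr : C ⬝ᵥ X (k + p) -
      (C ⬝ᵥ (A ^ p).mulVec Xy +
        ∑ i ∈ Finset.range p, (C ⬝ᵥ (A ^ i).mulVec B) * u (k + p - 1 - i)) =
      (∑ i ∈ Finset.range p, (C ⬝ᵥ (A ^ i).mulVec M) * w (k + p - 1 - i))
        - (Matrix.vecMul (Matrix.vecMul C (A ^ p)) E) ⬝ᵥ δ := by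
    rw [key p, hXy']
    rw [mulVec_add, dotProduct_add, dotProduct_add, myDotSum]
    have : ∀ i ∈ Finset.range p,
        C ⬝ᵥ (u (k + p - 1 - i) • (A ^ i).mulVec B + w (k + p - 1 - i) • (A ^ i).mulVec M)
        = (C ⬝ᵥ (A ^ i).mulVec B) * u (k + p - 1 - i)
          + (C ⬝ᵥ (A ^ i).mulVec M) * w (k + p - 1 - i) := by
      intro i _
      rw [dotProduct_add, dotProduct_smul, dotProduct_smul]
      ring_nf
    rw [Finset.sum_congr rfl this, Finset.sum_add_distrib]
    have hEδ : C ⬝ᵥ (A ^ p).mulVec (E.mulVec δ) =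
        (Matrix.vecMul (Matrix.vecMul C (A ^ p)) E) ⬝ᵥ δ := by
      rw [mulVec_mulVec, dotProduct_mulVec, vecMul_vecMul]
    rw [hEδ]; ring
  rw [herr]
  calc |(∑ i ∈ Finset.range p, (C ⬝ᵥ (A ^ i).mulVec M) * w (k + p - 1 - i))
        - (Matrix.vecMul (Matrix.vecMul C (A ^ p)) E) ⬝ᵥ δ|
      ≤ |∑ i ∈ Finset.range p, (C ⬝ᵥ (A ^ i).mulVec M) * w (k + p - 1 - i)|
        + |(Matrix.vecMul (Matrix.vecMul C (A ^ p)) E) ⬝ᵥ δ| := abs_sub _ _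
    _ ≤ (∑ i ∈ Finset.range p, |C ⬝ᵥ (A ^ i).mulVec M|) * wbar
        + (∑ j : Fin o, |Matrix.vecMul (Matrix.vecMul C (A ^ p)) E j|) * dbar := by
      gcongr ?_ + ?_
      · calc |∑ i ∈ Finset.range p, (C ⬝ᵥ (A ^ i).mulVec M) * w (k + p - 1 - i)|
            ≤ ∑ i ∈ Finset.range p, |(C ⬝ᵥ (A ^ i).mulVec M) * w (k + p - 1 - i)| :=
              Finset.abs_sum_le_sum_abs _ _
          _ ≤ ∑ i ∈ Finset.range p, |C ⬝ᵥ (A ^ i).mulVec M| * wbar := by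
              refine Finset.sum_le_sum fun i _ => ?_
              rw [abs_mul]
              exact mul_le_mul_of_nonneg_left (hw _) (abs_nonneg _)
          _ = _ := by rw [← Finset.sum_mul]
      · calc |(Matrix.vecMul (Matrix.vecMul C (A ^ p)) E) ⬝ᵥ δ|
            ≤ ∑ j : Fin o, |Matrix.vecMul (Matrix.vecMul C (A ^ p)) E j * δ j| :=
              Finset.abs_sum_le_sum_abs _ _
          _ ≤ ∑ j : Fin o, |Matrix.vecMul (Matrix.vecMul C (A ^ p)) E j| * dbar := by
              refine Finset.sum_le_sum fun j _ => ?_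
              rw [abs_mul]
              exact mul_le_mul_of_nonneg_left (hδ _) (abs_nonneg _)
          _ = _ := by rw [← Finset.sum_mul]
end
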